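/- With gf as above, the function F(a,b,c,d) := \prod_{j=1}^{c-a} ( (X q^{j-1-2b+a} + Y q^{-j+1+2d-a})(1 - q^{2(b-d)+2j}) ) / ( 2 (1 - q^{2j}) ) satisfies the recursion F(a,b,c,d) = ((X q^{a-2b} + Y q^{2b-a})/2) F(a+1,b,c,d) + F(a,b-1,c,d) for all integers a < c and b > d. -/

import Mathlib

set_option maxHeartbeats 1000000

/-- The field of rational functions in the three indeterminates `X`, `Y`, `q`. -/
noncomputable abbrev MyF : Type := FractionRing (MvPolynomial (Fin 3) ℚ)

/-- The indeterminate `X`. -/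
noncomputable def Xv : MyF := algebraMap (MvPolynomial (Fin 3) ℚ) MyF (MvPolynomial.X 0)
/-- The indeterminate `Y`. -/
noncomputable def Yv : MyF := algebraMap (MvPolynomial (Fin 3) ℚ) MyF (MvPolynomial.X 1)
/-- The indeterminate `q`. -/
noncomputable def qv : MyF := algebraMap (MvPolynomial (Fin 3) ℚ) MyF (MvPolynomial.X 2)

/-- `Fgf a b c d = ∏_{j=1}^{c-a} ((X q^{j-1-2b+a} + Y q^{-j+1+2d-a})(1-q^{2(b-d)+2j}))/(2(1-q^{2j}))`
(the closed form of the lattice-path generating function). -/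
noncomputable def Fgf (a b c d : ℤ) : MyF :=
  ∏ t ∈ Finset.range (c - a).toNat,
    ((Xv * qv ^ ((t : ℤ) + 1 - 1 - 2 * b + a) + Yv * qv ^ (-((t : ℤ) + 1) + 1 + 2 * d - a)) *
        (1 - qv ^ (2 * (b - d) + 2 * ((t : ℤ) + 1)))) /
      (2 * (1 - qv ^ (2 * ((t : ℤ) + 1))))

lemma qv_ne_zero : qv ≠ 0 := by
  have hinj : Function.Injective (algebraMap (MvPolynomial (Fin 3) ℚ) MyF) :=
    IsFractionRing.injective _ _
  rw [qv]
  exact (map_ne_zero_iff _ hinj).mpr (MvPolynomial.X_ne_zero _)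

lemma one_sub_qv_pow_ne_zero (k : ℕ) : 1 - qv ^ (2 * ((k : ℤ) + 1)) ≠ 0 := by
  have hinj : Function.Injective (algebraMap (MvPolynomial (Fin 3) ℚ) MyF) :=
    IsFractionRing.injective _ _
  have h1 : (2 * ((k : ℤ) + 1)) = ((2 * k + 2 : ℕ) : ℤ) := by push_cast; ring
  rw [h1, zpow_natCast, sub_ne_zero]
  intro h
  have h2 : (MvPolynomial.X (R := ℚ) (2 : Fin 3)) ^ (2 * k + 2) = 1 := by
    apply hinj
    rw [map_pow, map_one, ← qv, ← h]
  have h3 := congrArg MvPolynomial.constantCoeff h2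
  simp [MvPolynomial.constantCoeff_X] at h3

/-- The basic `q`-Pascal-type identity underlying the recursion. -/
lemma key_prod (A B m N : ℤ) :
    (Xv * qv ^ A + Yv * qv ^ B) * (1 - qv ^ (2 * m + 2 * N)) =
      (Xv * qv ^ A + Yv * qv ^ (B + 2 * m)) * (1 - qv ^ (2 * N)) +
        qv ^ (N - 1) * ((Xv * qv ^ (N + 1 + A) + Yv * qv ^ (1 - N + B)) * (1 - qv ^ (2 * m))) := by
  have hq : qv ≠ 0 := qv_ne_zero
  have hA : qv ^ A ≠ 0 := zpow_ne_zero _ hq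
  have hB : qv ^ B ≠ 0 := zpow_ne_zero _ hq
  have hm : qv ^ m ≠ 0 := zpow_ne_zero _ hq
  have hN : qv ^ N ≠ 0 := zpow_ne_zero _ hq
  simp only [sub_eq_add_neg, two_mul, zpow_add₀ hq, zpow_neg, zpow_one]
  field_simp
  ring

/-- The division form of the key identity. -/
lemma key_div (A B m N : ℤ) (hden : 1 - qv ^ (2 * N) ≠ 0) :
    (Xv * qv ^ A + Yv * qv ^ B) * ((1 - qv ^ (2 * m + 2 * N)) / (2 * (1 - qv ^ (2 * N))))
      = (Xv * qv ^ A + Yv * qv ^ (B + 2 * m)) / 2 +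
        qv ^ (N - 1) * ((Xv * qv ^ (N + 1 + A) + Yv * qv ^ (1 - N + B)) *
          (1 - qv ^ (2 * m)) / (2 * (1 - qv ^ (2 * N)))) := by
  have h2 : (2 : MyF) ≠ 0 := two_ne_zero
  have hk := key_prod A B m N
  rw [← mul_div_assoc, ← mul_div_assoc,
    div_add_div _ _ h2 (mul_ne_zero h2 hden),
    div_eq_div_iff (mul_ne_zero h2 hden) (mul_ne_zero h2 (mul_ne_zero h2 hden))]
  linear_combination (4 * (1 - qv ^ (2 * N))) * hk

/-- Absorbing a factor of `qv` into a product term. -/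
lemma fuse (E1 E2 E3 E4 : ℤ) :
    qv * ((Xv * qv ^ E1 + Yv * qv ^ E2) * (1 - qv ^ E3) / (2 * (1 - qv ^ E4)))
      = (Xv * qv ^ (E1 + 1) + Yv * qv ^ (E2 + 1)) * (1 - qv ^ E3) / (2 * (1 - qv ^ E4)) := by
  have hq : qv ≠ 0 := qv_ne_zero
  rw [zpow_add₀ hq, zpow_add₀ hq, zpow_one]
  ring

lemma prod_split1 (f g : ℕ → MyF) (k : ℕ) :
    ∏ t ∈ Finset.range (k + 1), f t * g t
      = f 0 * g k * ∏ t ∈ Finset.range k, f (t + 1) * g t := by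
  rw [Finset.prod_mul_distrib, Finset.prod_mul_distrib, Finset.prod_range_succ',
    Finset.prod_range_succ]
  ring

lemma prod_split2 (f g : ℕ → MyF) (k : ℕ) :
    ∏ t ∈ Finset.range (k + 1), f t * g t
      = f k * g 0 * ∏ t ∈ Finset.range k, f t * g (t + 1) := by
  rw [Finset.prod_mul_distrib, Finset.prod_mul_distrib, Finset.prod_range_succ,
    Finset.prod_range_succ']
  ring

/-- The closed form `Fgf` satisfies the lattice-path recursion
`F(a,b,c,d) = ((X q^{a-2b} + Y q^{2b-a})/2) F(a+1,b,c,d) + F(a,b-1,c,d)`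
for all integers `a < c` and `b > d`. -/
theorem Fgf_recursion (a b c d : ℤ) (hac : a < c) (hbd : d < b) :
    Fgf a b c d =
      (Xv * qv ^ (a - 2 * b) + Yv * qv ^ (2 * b - a)) / 2 * Fgf (a + 1) b c d
        + Fgf a (b - 1) c d := by
  have hq : qv ≠ 0 := qv_ne_zero
  obtain ⟨k, hk⟩ : ∃ k, (c - a).toNat = k + 1 := ⟨(c - a).toNat - 1, by omega⟩
  have hk' : (c - (a + 1)).toNat = k := by omega
  have hden := one_sub_qv_pow_ne_zero k
  have h2 : (2 : MyF) ≠ 0 := two_ne_zero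
  -- h1 : split off the first X/Y factor and the last q-factor
  have h1 : Fgf a b c d =
      (Xv * qv ^ (a - 2 * b) + Yv * qv ^ (2 * d - a)) *
        ((1 - qv ^ (2 * (b - d) + 2 * ((k : ℤ) + 1))) / (2 * (1 - qv ^ (2 * ((k : ℤ) + 1))))) *
        Fgf (a + 1) b c d := by
    rw [Fgf, Fgf, hk, hk']
    rw [show
        (∏ t ∈ Finset.range (k + 1),
          ((Xv * qv ^ ((t : ℤ) + 1 - 1 - 2 * b + a) + Yv * qv ^ (-((t : ℤ) + 1) + 1 + 2 * d - a)) *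
            (1 - qv ^ (2 * (b - d) + 2 * ((t : ℤ) + 1)))) /
          (2 * (1 - qv ^ (2 * ((t : ℤ) + 1)))))
        = ∏ t ∈ Finset.range (k + 1),
            (fun t : ℕ => Xv * qv ^ ((t : ℤ) + 1 - 1 - 2 * b + a) +
              Yv * qv ^ (-((t : ℤ) + 1) + 1 + 2 * d - a)) t *
            (fun t : ℕ => (1 - qv ^ (2 * (b - d) + 2 * ((t : ℤ) + 1))) /
              (2 * (1 - qv ^ (2 * ((t : ℤ) + 1))))) t
        from Finset.prod_congr rfl fun t _ => by ring]
    rw [prod_split1]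
    congr 1
    · push_cast
      ring
    · refine Finset.prod_congr rfl fun t _ => ?_
      push_cast
      ring
  -- h2' : same for Fgf a (b-1) c d, splitting off the last X/Y factor and first q-factor
  have h2' : Fgf a (b - 1) c d =
      qv ^ ((k : ℤ)) *
        ((Xv * qv ^ ((k : ℤ) + 2 + a - 2 * b) + Yv * qv ^ (-(k : ℤ) + 2 * d - a)) *
          (1 - qv ^ (2 * (b - d))) / (2 * (1 - qv ^ (2 * ((k : ℤ) + 1))))) *
        Fgf (a + 1) b c d := by
    rw [Fgf, Fgf, hk, hk']
    rw [show
        (∏ t ∈ Finset.range (k + 1),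
          ((Xv * qv ^ ((t : ℤ) + 1 - 1 - 2 * (b - 1) + a) +
              Yv * qv ^ (-((t : ℤ) + 1) + 1 + 2 * d - a)) *
            (1 - qv ^ (2 * ((b - 1) - d) + 2 * ((t : ℤ) + 1)))) /
          (2 * (1 - qv ^ (2 * ((t : ℤ) + 1)))))
        = ∏ t ∈ Finset.range (k + 1),
            (fun t : ℕ => (Xv * qv ^ ((t : ℤ) + 1 - 1 - 2 * (b - 1) + a) +
              Yv * qv ^ (-((t : ℤ) + 1) + 1 + 2 * d - a)) /
              (2 * (1 - qv ^ (2 * ((t : ℤ) + 1))))) t *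
            (fun t : ℕ => 1 - qv ^ (2 * ((b - 1) - d) + 2 * ((t : ℤ) + 1))) t
        from Finset.prod_congr rfl fun t _ => by ring]
    rw [prod_split2]
    rw [show
        (∏ t ∈ Finset.range k,
          (fun t : ℕ => (Xv * qv ^ ((t : ℤ) + 1 - 1 - 2 * (b - 1) + a) +
            Yv * qv ^ (-((t : ℤ) + 1) + 1 + 2 * d - a)) /
            (2 * (1 - qv ^ (2 * ((t : ℤ) + 1))))) t *
          (fun t : ℕ => 1 - qv ^ (2 * ((b - 1) - d) + 2 * ((t : ℤ) + 1))) (t + 1))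
        = ∏ t ∈ Finset.range k,
            qv * (((Xv * qv ^ ((t : ℤ) + 1 - 1 - 2 * b + (a + 1)) +
                Yv * qv ^ (-((t : ℤ) + 1) + 1 + 2 * d - (a + 1))) *
              (1 - qv ^ (2 * (b - d) + 2 * ((t : ℤ) + 1)))) /
              (2 * (1 - qv ^ (2 * ((t : ℤ) + 1)))))
        from Finset.prod_congr rfl fun t _ => by
          rw [fuse]
          push_cast
          ring]
    rw [Finset.prod_mul_distrib, Finset.prod_const, Finset.card_range, ← zpow_natCast qv k]
    rw [show ((fun t : ℕ => (Xv * qv ^ ((t : ℤ) + 1 - 1 - 2 * (b - 1) + a) +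
            Yv * qv ^ (-((t : ℤ) + 1) + 1 + 2 * d - a)) /
            (2 * (1 - qv ^ (2 * ((t : ℤ) + 1))))) k *
          (fun t : ℕ => 1 - qv ^ (2 * ((b - 1) - d) + 2 * ((t : ℤ) + 1))) 0)
        = (Xv * qv ^ ((k : ℤ) + 2 + a - 2 * b) + Yv * qv ^ (-(k : ℤ) + 2 * d - a)) *
            (1 - qv ^ (2 * (b - d))) / (2 * (1 - qv ^ (2 * ((k : ℤ) + 1))))
        from by
          push_cast
          ring]
    ring
  -- the scalar identity, from the key lemma
  have hS := key_div (a - 2 * b) (2 * d - a) (b - d) ((k : ℤ) + 1) hden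
  rw [show ((k : ℤ) + 1 - 1) = (k : ℤ) from by ring,
    show ((k : ℤ) + 1 + 1 + (a - 2 * b)) = (k : ℤ) + 2 + a - 2 * b from by ring,
    show (1 - ((k : ℤ) + 1) + (2 * d - a)) = -(k : ℤ) + 2 * d - a from by ring,
    show ((2 * d - a) + 2 * (b - d)) = 2 * b - a from by ring] at hS
  rw [h1, h2', hS]
  ring
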